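/- Let G = K * L be a free product of groups with L non-trivial, and suppose (H_k)_{k≥0} is an increasing chain of subgroups of G with G = ⋃ H_k such that each H_k is contained in some conjugate of K. Then this leads to a contradiction; that is, G cannot equal the union of an increasing chain of subgroups each conjugate into K when L is non-trivial. -/
import Mathlib


theorem stmt4 (K L : Type*) [Group K] [Group L] (hL : Nontrivial L)
    (H : ℕ → Subgroup (Monoid.Coprod K L))
    (hmono : Monotone H)
    (hconj : ∀ k, ∃ g : Monoid.Coprod K L,
      H k ≤ ((Monoid.Coprod.inl : K →* Monoid.Coprod K L).range).map
        (MulAut.conj g).toMonoidHom)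
    (hunion : ∀ x : Monoid.Coprod K L, ∃ k, x ∈ H k) :
    False := by
  obtain ⟨l, hl⟩ := exists_ne (1 : L)
  obtain ⟨k, hk⟩ := hunion (Monoid.Coprod.inr l)
  obtain ⟨g, hg⟩ := hconj k
  obtain ⟨a, ⟨b, rfl⟩, ha⟩ := hg hk
  apply hl
  have := congrArg (Monoid.Coprod.lift (1 : K →* L) (MonoidHom.id L)) ha
  simpa using this.symm
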